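/- Let opt_M(π) denote the minimum number of monotone blocks in a partition of {1,…,n} for a permutation π, and let opt_R(π) denote the minimum k such that {1,…,n} can be partitioned into k blocks each of which becomes monotone for π after deleting at most 2 elements (at most one from each 'end'). Then opt_R(π) ≤ opt_M(π) ≤ opt_R(π) + 2⌈√(2·opt_R(π))⌉. -/

import Mathlib

/-- `π` is monotone on `S`. -/
def monoOn {n : ℕ} (π : Equiv.Perm (Fin n)) (S : Set (Fin n)) : Prop :=
  StrictMonoOn π S ∨ StrictAntiOn π S

/-- Minimum number of blocks in a partition of `{1,…,n}` into monotone subsequences of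
`π`. -/
noncomputable def optM (n : ℕ) (π : Equiv.Perm (Fin n)) : ℕ :=
  sInf {k : ℕ | ∃ c : Fin n → Fin k, ∀ j : Fin k, monoOn π {i | c i = j}}

/-- Minimum number of blocks in a partition of `{1,…,n}` into blocks each of which
becomes monotone for `π` after deleting at most 2 elements. -/
noncomputable def optR (n : ℕ) (π : Equiv.Perm (Fin n)) : ℕ :=
  sInf {k : ℕ | ∃ c : Fin n → Fin k, ∀ j : Fin k, ∃ D : Finset (Fin n),
    D.card ≤ 2 ∧ monoOn π ({i | c i = j} \ ↑D)}

section ES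

variable {α : Type*} [LinearOrder α]

open Function Finset

/-- Erdős–Szekeres, copied from the Mathlib Archive (not importable via `import Mathlib`). -/
theorem my_erdos_szekeres {r s n : ℕ} {f : Fin n → α} (hn : r * s < n) (hf : Injective f) :
    (∃ t : Finset (Fin n), r < #t ∧ StrictMonoOn f ↑t) ∨
      ∃ t : Finset (Fin n), s < #t ∧ StrictAntiOn f ↑t := by
  let inc_sequences_ending_in : Fin n → Finset (Finset (Fin n)) := fun i =>
    univ.powerset.filter fun t => Finset.max t = i ∧ StrictMonoOn f ↑t
  let dec_sequences_ending_in : Fin n → Finset (Finset (Fin n)) := fun i =>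
    univ.powerset.filter fun t => Finset.max t = i ∧ StrictAntiOn f ↑t
  have inc_i : ∀ i, {i} ∈ inc_sequences_ending_in i := fun i => by
    simp [inc_sequences_ending_in, StrictMonoOn]
  have dec_i : ∀ i, {i} ∈ dec_sequences_ending_in i := fun i => by
    simp [dec_sequences_ending_in, StrictAntiOn]
  let ab' : Fin n → ℕ × ℕ := by
    intro i
    apply
      (max' ((inc_sequences_ending_in i).image card) (Nonempty.image ⟨{i}, inc_i i⟩ _),
        max' ((dec_sequences_ending_in i).image card) (Nonempty.image ⟨{i}, dec_i i⟩ _))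
  generalize hab : ab' = ab
  rsuffices ⟨i, hi⟩ : ∃ i, r < (ab i).1 ∨ s < (ab i).2
  · refine Or.imp ?_ ?_ hi
    on_goal 1 =>
      have : (ab i).1 ∈ image card (inc_sequences_ending_in i) := by
        simp only [← hab]; exact max'_mem _ (Nonempty.image ⟨{i}, inc_i i⟩ _)
    on_goal 2 =>
      have : (ab i).2 ∈ image card (dec_sequences_ending_in i) := by
        simp only [← hab]; exact max'_mem _ (Nonempty.image ⟨{i}, dec_i i⟩ _)
    all_goals
      intro hi
      rw [mem_image] at this
      obtain ⟨t, ht₁, ht₂⟩ := this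
      refine ⟨t, by rwa [ht₂], ?_⟩
      rw [mem_filter] at ht₁
      apply ht₁.2.2
  have : Injective ab := by
    simp only [← hab]
    apply Injective.of_lt_imp_ne
    intro i j k q
    injection q with q₁ q₂
    cases lt_or_gt_of_ne fun _ => ne_of_lt ‹i < j› (hf ‹f i = f j›)
    on_goal 1 =>
      apply ne_of_lt _ q₁
      have : (ab' i).1 ∈ image card (inc_sequences_ending_in i) := by exact max'_mem _ (Nonempty.image ⟨{i}, inc_i i⟩ _)
    on_goal 2 =>
      apply ne_of_lt _ q₂
      have : (ab' i).2 ∈ image card (dec_sequences_ending_in i) := by exact max'_mem _ (Nonempty.image ⟨{i}, dec_i i⟩ _)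
    all_goals
      rw [Nat.lt_iff_add_one_le]
      apply le_max'
      rw [mem_image] at this ⊢
      rcases this with ⟨t, ht₁, ht₂⟩
      rw [mem_filter] at ht₁
      have : t.max = i := by simp only [ht₁.2.1]
      refine ⟨insert j t, ?_, ?_⟩
      · rw [mem_filter]
        refine ⟨?_, ?_, ?_⟩
        · rw [mem_powerset]; apply subset_univ
        · convert max_insert (a := j) (s := t)
          rw [ht₁.2.1, max_eq_left]
          apply WithBot.coe_le_coe.mpr (le_of_lt ‹i < j›)
        simp only [StrictMonoOn, StrictAntiOn, coe_insert, Set.mem_insert_iff, mem_coe]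
        rintro x ⟨rfl | _⟩ y ⟨rfl | _⟩ _
        · apply (irrefl _ ‹j < j›).elim
        · exfalso
          apply not_le_of_gt (_root_.trans ‹i < j› ‹j < y›) (le_max_of_eq ‹y ∈ t› ‹t.max = i›)
        · first
          | apply lt_of_le_of_lt _ ‹f i < f j›
          | apply lt_of_lt_of_le ‹f j < f i› _
          rcases lt_or_eq_of_le (le_max_of_eq ‹x ∈ t› ‹t.max = i›) with (_ | rfl)
          · apply le_of_lt (ht₁.2.2 ‹x ∈ t› (mem_of_max ‹t.max = i›) ‹x < i›)
          · rfl
        · apply ht₁.2.2 ‹x ∈ t› ‹y ∈ t› ‹x < y›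
      · rw [card_insert_of_notMem, ht₂]
        intro
        apply not_le_of_gt ‹i < j› (le_max_of_eq ‹j ∈ t› ‹t.max = i›)
  by_contra! q
  let ran : Finset (ℕ × ℕ) := (range r).image Nat.succ ×ˢ (range s).image Nat.succ
  have : image ab univ ⊆ ran := by
    rintro ⟨x₁, x₂⟩
    simp only [ran, mem_image, exists_prop, mem_range, mem_univ, mem_product, true_and,
      Prod.ext_iff]
    rintro ⟨i, rfl, rfl⟩
    specialize q i
    have z : 1 ≤ (ab i).1 ∧ 1 ≤ (ab i).2 := by
      simp only [← hab]
      constructor <;>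
        · apply le_max'
          rw [mem_image]
          exact ⟨{i}, by solve_by_elim, card_singleton i⟩
    exact ⟨⟨(ab i).1 - 1, by omega⟩, (ab i).2 - 1, by omega⟩
  apply not_le_of_gt hn
  simpa [ran, Nat.succ_injective, card_image_of_injective, ‹Injective ab›] using card_le_card this

end ES

namespace Stmt17Aux

open Finset

variable {n : ℕ} (π : Equiv.Perm (Fin n))

lemma monoOn_mono {S A : Set (Fin n)} (h : monoOn π S) (hA : A ⊆ S) : monoOn π A :=
  h.imp (fun h => h.mono hA) (fun h => h.mono hA)

/-- Extraction of a monotone subset of size `s+1` from a set of size `> s*s`. -/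
lemma extract (T : Finset (Fin n)) (s : ℕ) (h : s * s < T.card) :
    ∃ M ⊆ T, M.card = s + 1 ∧ monoOn π ↑M := by
  let e := T.orderIsoOfFin rfl
  let f : Fin T.card → Fin n := fun i => π (e i)
  have hf : Function.Injective f := fun a b hab =>
    e.injective (Subtype.coe_injective (π.injective hab))
  have key : ∃ M₀ : Finset (Fin n), s < M₀.card ∧ M₀ ⊆ T ∧ monoOn π ↑M₀ := by
    have hcoe : Function.Injective fun i : Fin T.card => ((e i : T) : Fin n) :=
      fun a b hab => e.injective (Subtype.coe_injective hab)
    rcases my_erdos_szekeres (r := s) (s := s) h hf with ⟨t, ht, htm⟩ | ⟨t, ht, htm⟩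
    · refine ⟨t.image fun i => ((e i : T) : Fin n), ?_, ?_, Or.inl ?_⟩
      · rwa [Finset.card_image_of_injective _ hcoe]
      · intro x hx
        obtain ⟨i, _, rfl⟩ := Finset.mem_image.mp hx
        exact (e i).2
      · intro a ha b hb hab
        obtain ⟨i, hi, rfl⟩ := Finset.mem_image.mp (Finset.mem_coe.mp ha)
        obtain ⟨j, hj, rfl⟩ := Finset.mem_image.mp (Finset.mem_coe.mp hb)
        have hij : i < j := e.lt_iff_lt.mp (Subtype.coe_lt_coe.mp hab)
        exact htm hi hj hij
    · refine ⟨t.image fun i => ((e i : T) : Fin n), ?_, ?_, Or.inr ?_⟩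
      · rwa [Finset.card_image_of_injective _ hcoe]
      · intro x hx
        obtain ⟨i, _, rfl⟩ := Finset.mem_image.mp hx
        exact (e i).2
      · intro a ha b hb hab
        obtain ⟨i, hi, rfl⟩ := Finset.mem_image.mp (Finset.mem_coe.mp ha)
        obtain ⟨j, hj, rfl⟩ := Finset.mem_image.mp (Finset.mem_coe.mp hb)
        have hij : i < j := e.lt_iff_lt.mp (Subtype.coe_lt_coe.mp hab)
        exact htm hi hj hij
  obtain ⟨M₀, hM₀card, hM₀T, hM₀mono⟩ := key
  obtain ⟨M, hMsub, hMcard⟩ := Finset.exists_subset_card_eq (s := M₀) (n := s + 1) (by omega)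
  exact ⟨M, hMsub.trans hM₀T, hMcard, monoOn_mono π hM₀mono (Finset.coe_subset.mpr hMsub)⟩

lemma add_color {T T' M : Finset (Fin n)} {m : ℕ} (hM : monoOn π ↑M)
    (hT : T ⊆ T' ∪ M)
    (c : Fin n → ℕ) (hc1 : ∀ i ∈ T', c i < m) (hc2 : ∀ j, monoOn π (↑T' ∩ {i | c i = j})) :
    ∃ c' : Fin n → ℕ, (∀ i ∈ T, c' i < m + 1) ∧ ∀ j, monoOn π (↑T ∩ {i | c' i = j}) := by
  refine ⟨fun i => if i ∈ M then m else c i, ?_, ?_⟩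
  · intro i hi
    by_cases hM' : i ∈ M
    · simp [hM']
    · have hiT' : i ∈ T' := by
        rcases Finset.mem_union.mp (hT hi) with h | h
        · exact h
        · exact absurd h hM'
      have := hc1 i hiT'
      simp only [if_neg hM']; omega
  · intro j
    by_cases hj : j = m
    · refine monoOn_mono π hM ?_
      rintro i ⟨hiT, hij⟩
      by_contra hiM
      rw [Finset.mem_coe] at hiM
      have hiT' : i ∈ T' := by
        rcases Finset.mem_union.mp (hT hiT) with h | h
        · exact h
        · exact absurd h hiM
      have h1 := hc1 i hiT'
      simp only [Set.mem_setOf_eq, if_neg hiM] at hij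
      omega
    · refine monoOn_mono π (hc2 j) ?_
      rintro i ⟨hiT, hij⟩
      simp only [Set.mem_setOf_eq] at hij
      by_cases hiM : i ∈ M
      · rw [if_pos hiM] at hij; exact absurd hij.symm hj
      · rw [if_neg hiM] at hij
        have hiT' : i ∈ T' := by
          rcases Finset.mem_union.mp (hT hiT) with h | h
          · exact h
          · exact absurd h hiM
        exact ⟨Finset.mem_coe.mpr hiT', hij⟩

/-- Any set of size `≤ s*s` can be partitioned into at most `2*s` monotone blocks. -/
lemma partition_sq : ∀ (s : ℕ) (T : Finset (Fin n)), T.card ≤ s * s →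
    ∃ c : Fin n → ℕ, (∀ i ∈ T, c i < 2 * s) ∧ ∀ j : ℕ, monoOn π (↑T ∩ {i | c i = j}) := by
  intro s
  induction s with
  | zero =>
    intro T hT
    have : T = ∅ := Finset.card_eq_zero.mp (Nat.le_zero.mp hT)
    subst this
    refine ⟨fun _ => 0, by simp, fun j => Or.inl ?_⟩
    intro a ha
    simp at ha
  | succ s IH =>
    intro T hT
    by_cases h1 : T.card ≤ s * s
    · obtain ⟨c, hc1, hc2⟩ := IH T h1
      exact ⟨c, fun i hi => by have := hc1 i hi; omega, hc2⟩
    · push_neg at h1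
      obtain ⟨M1, hM1T, hM1card, hM1mono⟩ := extract π T s h1
      set T1 := T \ M1 with hT1def
      have hT1card : T1.card = T.card - (s + 1) := by
        rw [hT1def, Finset.card_sdiff_of_subset hM1T, hM1card]
      have hTsub : T ⊆ T1 ∪ M1 := by
        intro i hi
        by_cases h : i ∈ M1
        · exact Finset.mem_union_right _ h
        · exact Finset.mem_union_left _ (Finset.mem_sdiff.mpr ⟨hi, h⟩)
      by_cases h2 : T1.card ≤ s * s
      · obtain ⟨c, hc1, hc2⟩ := IH T1 h2
        obtain ⟨c', hc'1, hc'2⟩ := add_color π hM1mono hTsub c hc1 hc2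
        exact ⟨c', fun i hi => by have := hc'1 i hi; omega, hc'2⟩
      · push_neg at h2
        obtain ⟨M2, hM2T, hM2card, hM2mono⟩ := extract π T1 s h2
        set T2 := T1 \ M2 with hT2def
        have hT2card : T2.card = T1.card - (s + 1) := by
          rw [hT2def, Finset.card_sdiff_of_subset hM2T, hM2card]
        have hT2sub : T1 ⊆ T2 ∪ M2 := by
          intro i hi
          by_cases h : i ∈ M2
          · exact Finset.mem_union_right _ h
          · exact Finset.mem_union_left _ (Finset.mem_sdiff.mpr ⟨hi, h⟩)
        have hT2small : T2.card ≤ s * s := by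
          have : (s + 1) * (s + 1) = s * s + 2 * s + 1 := by ring
          omega
        obtain ⟨c, hc1, hc2⟩ := IH T2 hT2small
        obtain ⟨c', hc'1, hc'2⟩ := add_color π hM2mono hT2sub c hc1 hc2
        obtain ⟨c'', hc''1, hc''2⟩ := add_color π hM1mono hTsub c' hc'1 hc'2
        exact ⟨c'', fun i hi => by have := hc''1 i hi; omega, hc''2⟩

end Stmt17Aux

/-- `optR π ≤ optM π ≤ optR π + 2⌈√(2·optR π)⌉`. -/
theorem stmt_17 (n : ℕ) (π : Equiv.Perm (Fin n)) :
    optR n π ≤ optM n π ∧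
    optM n π ≤ optR n π + 2 * ⌈Real.sqrt (2 * optR n π)⌉₊ := by
  classical
  set Mset := {k : ℕ | ∃ c : Fin n → Fin k, ∀ j : Fin k, monoOn π {i | c i = j}} with hMset
  set Rset := {k : ℕ | ∃ c : Fin n → Fin k, ∀ j : Fin k, ∃ D : Finset (Fin n),
    D.card ≤ 2 ∧ monoOn π ({i | c i = j} \ ↑D)} with hRset
  have hMn : n ∈ Mset := by
    refine ⟨fun i => i, fun j => Or.inl ?_⟩
    intro a ha b hb hab
    simp only [Set.mem_setOf_eq] at ha hb
    subst ha; subst hb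
    exact absurd hab (lt_irrefl _)
  have hsub : Mset ⊆ Rset := by
    rintro k ⟨c, hc⟩
    exact ⟨c, fun j => ⟨∅, by simp, by simpa using hc j⟩⟩
  have hoptM_mem : optM n π ∈ Mset := Nat.sInf_mem ⟨n, hMn⟩
  have hoptR_mem : optR n π ∈ Rset := Nat.sInf_mem ⟨n, hsub hMn⟩
  constructor
  · exact Nat.sInf_le (hsub hoptM_mem)
  · rcases Nat.eq_zero_or_pos n with hn | hn
    · subst hn
      have h0 : (0 : ℕ) ∈ Mset := ⟨fun i => i.elim0, fun j => j.elim0⟩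
      exact le_trans (Nat.sInf_le h0) (Nat.zero_le _)
    · set k := optR n π with hkdef
      obtain ⟨c, hc⟩ := hoptR_mem
      choose D hD1 hD2 using hc
      have hkpos : 0 < k := (c ⟨0, hn⟩).pos
      set s := ⌈Real.sqrt (2 * (k : ℝ))⌉₊ with hsdef
      set T : Finset (Fin n) := Finset.univ.filter (fun i => i ∈ D (c i)) with hTdef
      have hTcard : T.card ≤ 2 * k := by
        have hsub' : T ⊆ Finset.univ.biUnion D := by
          intro i hi
          exact Finset.mem_biUnion.mpr ⟨c i, Finset.mem_univ _, (Finset.mem_filter.mp hi).2⟩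
        calc T.card ≤ (Finset.univ.biUnion D).card := Finset.card_le_card hsub'
          _ ≤ ∑ j, (D j).card := Finset.card_biUnion_le
          _ ≤ ∑ _j : Fin k, 2 := Finset.sum_le_sum (fun j _ => hD1 j)
          _ = 2 * k := by simp [mul_comm]
      have h2k : 2 * k ≤ s * s := by
        have h0 : (0 : ℝ) ≤ 2 * (k : ℝ) := by positivity
        have hle : Real.sqrt (2 * (k : ℝ)) ≤ (s : ℝ) := Nat.le_ceil _
        have hnn := Real.sqrt_nonneg (2 * (k : ℝ))
        have hsq := Real.sq_sqrt h0
        have : (2 * k : ℝ) ≤ (s : ℝ) * (s : ℝ) := by nlinarith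
        exact_mod_cast this
      obtain ⟨cT, hcT1, hcT2⟩ := Stmt17Aux.partition_sq π s T (le_trans hTcard h2k)
      set K := k + 2 * s with hKdef
      have hKmem : K ∈ Mset := by
        refine ⟨fun i => if h : i ∈ T then ⟨k + cT i, by have := hcT1 i h; omega⟩
          else ⟨(c i : ℕ), by have := (c i).2; omega⟩, fun j => ?_⟩
        by_cases hj : (j : ℕ) < k
        · refine Stmt17Aux.monoOn_mono π (hD2 ⟨(j : ℕ), hj⟩) ?_
          intro i hi
          simp only [Set.mem_setOf_eq] at hi
          by_cases hT : i ∈ T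
          · rw [dif_pos hT] at hi
            have : k + cT i = (j : ℕ) := congrArg Fin.val hi
            omega
          · rw [dif_neg hT] at hi
            have hval : (c i : ℕ) = (j : ℕ) := congrArg Fin.val hi
            have hci : c i = ⟨(j : ℕ), hj⟩ := Fin.ext hval
            refine ⟨by simp [hci], ?_⟩
            intro hD
            apply hT
            rw [hTdef]
            refine Finset.mem_filter.mpr ⟨Finset.mem_univ _, ?_⟩
            rwa [hci]
        · push_neg at hj
          refine Stmt17Aux.monoOn_mono π (hcT2 ((j : ℕ) - k)) ?_
          intro i hi
          simp only [Set.mem_setOf_eq] at hi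
          by_cases hT : i ∈ T
          · rw [dif_pos hT] at hi
            have : k + cT i = (j : ℕ) := congrArg Fin.val hi
            exact ⟨Finset.mem_coe.mpr hT, by simp only [Set.mem_setOf_eq]; omega⟩
          · rw [dif_neg hT] at hi
            have hval : (c i : ℕ) = (j : ℕ) := congrArg Fin.val hi
            have := (c i).2
            omega
      calc optM n π ≤ K := Nat.sInf_le hKmem
        _ = k + 2 * s := rfl
        _ = optR n π + 2 * ⌈Real.sqrt (2 * (optR n π : ℝ))⌉₊ := by rw [hkdef, hsdef]
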